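/- Let θ_c denote the multigraph consisting of two vertices joined by c parallel edges, with c ≥ 2. If M is a minimal minor-model of θ_c in a graph G, then M is connected and has no cut vertex, i.e., deleting any single vertex of M leaves a connected graph. -/

import Mathlib

/-- `G` contains θ_c (two vertices joined by `c` parallel edges) as a minor. -/
def HasThetaMinor {V : Type} (G : SimpleGraph V) (c : ℕ) : Prop :=
  ∃ A B : Set V, A.Nonempty ∧ B.Nonempty ∧ Disjoint A B ∧
    (G.induce A).Connected ∧ (G.induce B).Connected ∧
    ∃ E : Finset (V × V), E.card = c ∧ ∀ e ∈ E, e.1 ∈ A ∧ e.2 ∈ B ∧ G.Adj e.1 e.2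

/-- `M` is a minimal minor-model of θ_c in `G`. -/
def IsMinimalThetaModel {V : Type} (G : SimpleGraph V) (c : ℕ) (M : G.Subgraph) : Prop :=
  HasThetaMinor M.coe c ∧ ∀ M' : G.Subgraph, M' < M → ¬ HasThetaMinor M'.coe c

section Aux

variable {V : Type} {G : SimpleGraph V}

/-- Pushing an induced connected piece of `M.coe` down to `M.induce S`. -/
def ThetaAux.inducePush (M : G.Subgraph) (S : Set V) (hS : S ⊆ M.verts) (A : Set ↥M.verts)
    (hAS : ∀ a : ↥M.verts, a ∈ A → (a : V) ∈ S) :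
    (M.coe.induce A) ≃g ((M.induce S).coe.induce
      {x : ↥(M.induce S).verts | (⟨↑x, hS x.2⟩ : ↥M.verts) ∈ A}) where
  toFun y := by refine ⟨⟨(↑↑y : V), hAS ↑y y.2⟩, ?_⟩; exact y.2
  invFun x := by refine ⟨⟨(↑↑x : V), hS x.1.2⟩, ?_⟩; exact x.2
  left_inv := fun _ => rfl
  right_inv := fun _ => rfl
  map_rel_iff' := by
    intro y z
    constructor
    · intro h; exact h.2.2
    · intro h; exact ⟨hAS _ y.2, hAS _ z.2, h⟩

/-- A θ-structure inside `M` supported on `S` transfers to `M.induce S`. -/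
lemma ThetaAux.hasTheta_induce (M : G.Subgraph) (c : ℕ) (S : Set V) (hS : S ⊆ M.verts)
    (A B : Set ↥M.verts) (hA : A.Nonempty) (hB : B.Nonempty) (hd : Disjoint A B)
    (hAc : (M.coe.induce A).Connected) (hBc : (M.coe.induce B).Connected)
    (E : Finset (↥M.verts × ↥M.verts)) (hEc : E.card = c)
    (hE : ∀ e ∈ E, e.1 ∈ A ∧ e.2 ∈ B ∧ M.coe.Adj e.1 e.2)
    (hAS : ∀ a : ↥M.verts, a ∈ A → (a : V) ∈ S)
    (hBS : ∀ b : ↥M.verts, b ∈ B → (b : V) ∈ S) :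
    HasThetaMinor (M.induce S).coe c := by
  classical
  refine ⟨{x : ↥(M.induce S).verts | (⟨↑x, hS x.2⟩ : ↥M.verts) ∈ A},
          {x : ↥(M.induce S).verts | (⟨↑x, hS x.2⟩ : ↥M.verts) ∈ B}, ?_, ?_, ?_, ?_, ?_, ?_⟩
  · obtain ⟨a, ha⟩ := hA
    refine ⟨⟨(a : V), hAS a ha⟩, ?_⟩
    exact ha
  · obtain ⟨b, hb⟩ := hB
    refine ⟨⟨(b : V), hBS b hb⟩, ?_⟩
    exact hb
  · rw [Set.disjoint_left]
    intro x hxA hxB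
    exact Set.disjoint_left.mp hd hxA hxB
  · exact ((ThetaAux.inducePush M S hS A hAS).connected_iff).mp hAc
  · exact ((ThetaAux.inducePush M S hS B hBS).connected_iff).mp hBc
  · refine ⟨E.attach.image (fun e =>
      ((⟨(e.1.1 : V), hAS _ (hE e.1 e.2).1⟩ : ↥(M.induce S).verts),
       (⟨(e.1.2 : V), hBS _ (hE e.1 e.2).2.1⟩ : ↥(M.induce S).verts))), ?_, ?_⟩
    · rw [Finset.card_image_of_injective _ ?_, Finset.card_attach, hEc]
      intro e₁ e₂ h
      rw [Prod.mk.injEq] at h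
      apply Subtype.ext
      apply Prod.ext
      · have h1 := congrArg Subtype.val h.1
        exact Subtype.ext h1
      · have h2 := congrArg Subtype.val h.2
        exact Subtype.ext h2
    · intro e' he'
      rw [Finset.mem_image] at he'
      obtain ⟨e, _, rfl⟩ := he'
      obtain ⟨h1, h2, h3⟩ := hE e.1 e.2
      refine ⟨?_, ?_, ?_⟩
      · exact h1
      · exact h2
      · exact ⟨hAS _ h1, hBS _ h2, h3⟩

lemma ThetaAux.induce_lt_of_ne (M : G.Subgraph) {S : Set V} (hS : S ⊆ M.verts)
    (hne : S ≠ M.verts) : M.induce S < M := by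
  refine lt_of_le_of_ne ⟨hS, ?_⟩ ?_
  · intro a b h; exact h.2.2
  · intro h; exact hne (congrArg SimpleGraph.Subgraph.verts h)

/-- Homomorphism from an induced part of `M.coe` avoiding `v` into `M.deleteVerts {v}`. -/
def ThetaAux.avoidHom (M : G.Subgraph) (v : V) (s : Set ↥M.verts)
    (hs : ∀ x : ↥M.verts, x ∈ s → (x : V) ≠ v) :
    (M.coe.induce s) →g (M.deleteVerts {v}).coe where
  toFun x := ⟨(↑↑x : V), ⟨(x : ↥M.verts).2, by simpa using hs ↑x x.2⟩⟩
  map_rel' := by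
    intro x y h
    have hx := hs ↑x x.2
    have hy := hs ↑y y.2
    simp only [SimpleGraph.Subgraph.coe_adj, SimpleGraph.Subgraph.deleteVerts_adj]
    exact ⟨(x : ↥M.verts).2, by simpa using hx, (y : ↥M.verts).2, by simpa using hy, h⟩

/-- The valuation homomorphism from an induced part of `M.coe` to `M.coe`. -/
def ThetaAux.valHom (M : G.Subgraph) (s : Set ↥M.verts) : (M.coe.induce s) →g M.coe where
  toFun x := ↑x
  map_rel' := fun h => h

/-- Deleting a vertex of the `A`-side of the θ-structure keeps the model connected. -/
lemma ThetaAux.key_delete {M : G.Subgraph} {c : ℕ}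
    (hmin : ∀ M' : G.Subgraph, M' < M → ¬ HasThetaMinor M'.coe c)
    (A B : Set ↥M.verts) (hB : B.Nonempty) (hd : Disjoint A B)
    (hAc : (M.coe.induce A).Connected) (hBc : (M.coe.induce B).Connected)
    (E : Finset (↥M.verts × ↥M.verts)) (hEc : E.card = c)
    (hE : ∀ e ∈ E, e.1 ∈ A ∧ e.2 ∈ B ∧ M.coe.Adj e.1 e.2)
    (hverts : ∀ x : ↥M.verts, x ∈ A ∨ x ∈ B)
    (vv : ↥M.verts) (hvvA : vv ∈ A) :
    ((M.deleteVerts {(vv : V)}).coe).Connected := by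
  classical
  set v : V := (vv : V) with hv
  have hBv : ∀ b : ↥M.verts, b ∈ B → (b : V) ≠ v := by
    intro b hb h
    have : b = vv := Subtype.ext h
    exact Set.disjoint_left.mp hd hvvA (this ▸ hb)
  have hAv : ∀ x : ↥M.verts, x ∈ A \ {vv} → (x : V) ≠ v := by
    intro x hx h
    exact hx.2 (Subtype.ext h)
  let fB := ThetaAux.avoidHom M v B hBv
  let fA := ThetaAux.avoidHom M v (A \ {vv}) hAv
  have cross : ∀ a : ↥M.verts, a ∈ A → a ≠ vv →
      ∃ e ∈ E, ∃ h1 : e.1 ∈ A \ {vv}, ∀ (ha : a ∈ A \ {vv}),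
        (M.coe.induce (A \ {vv})).Reachable ⟨a, ha⟩ ⟨e.1, h1⟩ := by
    intro a haA hane
    by_contra hcon
    push_neg at hcon
    set C : Set ↥M.verts :=
      {x | ∃ hx : x ∈ A \ {vv},
        (M.coe.induce (A \ {vv})).Reachable ⟨a, ⟨haA, hane⟩⟩ ⟨x, hx⟩} with hC
    have haC : a ∈ C := ⟨⟨haA, hane⟩, SimpleGraph.Reachable.refl _⟩
    have hvvC : vv ∉ C := fun ⟨hx, _⟩ => hx.2 rfl
    have hclosed : ∀ x y : ↥M.verts, x ∈ C → y ∈ A \ {vv} → M.coe.Adj x y → y ∈ C := by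
      intro x y hxC hy hadj
      obtain ⟨hx, hr⟩ := hxC
      refine ⟨hy, hr.trans (SimpleGraph.Adj.reachable ?_)⟩
      exact hadj
    set A' : Set ↥M.verts := A \ C with hA'
    have hvvA' : vv ∈ A' := ⟨hvvA, hvvC⟩
    have walkdown : ∀ (x y : ↥A) (p : (M.coe.induce A).Walk x y), (↑y : ↥M.verts) = vv →
        (↑x : ↥M.verts) ∉ C →
        ∀ hx' : (↑x : ↥M.verts) ∈ A',
        (M.coe.induce A').Reachable ⟨↑x, hx'⟩ ⟨vv, hvvA'⟩ := by
      intro x y p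
      induction p with
      | nil =>
        intro hyv _ hx'
        have : (⟨_, hx'⟩ : ↥A') = ⟨vv, hvvA'⟩ := Subtype.ext hyv
        rw [this]
      | @cons x1 y1 _ hadj p ih =>
        intro hyv hxC hx'
        by_cases hyC : (↑y1 : ↥M.verts) ∈ C
        · by_cases hxv : (↑x1 : ↥M.verts) = vv
          · have : (⟨↑x1, hx'⟩ : ↥A') = ⟨vv, hvvA'⟩ := Subtype.ext hxv
            rw [this]
          · exfalso
            apply hxC
            refine hclosed ↑y1 ↑x1 hyC ⟨x1.2, hxv⟩ ?_
            exact (hadj : M.coe.Adj ↑x1 ↑y1).symm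
        · have hy' : (↑y1 : ↥M.verts) ∈ A' := ⟨y1.2, hyC⟩
          refine (SimpleGraph.Adj.reachable ?_).trans (ih hyv hyC hy')
          exact (hadj : M.coe.Adj ↑x1 ↑y1)
    have hA'c : (M.coe.induce A').Connected := by
      rw [SimpleGraph.connected_iff_exists_forall_reachable]
      refine ⟨⟨vv, hvvA'⟩, ?_⟩
      intro w
      have hwA : (↑w : ↥M.verts) ∈ A := w.2.1
      obtain ⟨p⟩ := hAc.preconnected ⟨↑w, hwA⟩ ⟨vv, hvvA⟩
      exact ((walkdown ⟨↑w, hwA⟩ ⟨vv, hvvA⟩ p rfl w.2.2 w.2).symm : _)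
    set S' : Set V := Subtype.val '' A' ∪ Subtype.val '' B with hS'
    have hS'sub : S' ⊆ M.verts := by
      rintro x (⟨a', _, rfl⟩ | ⟨b', _, rfl⟩) <;> exact Subtype.coe_prop _
    have haS' : (a : V) ∉ S' := by
      rintro (⟨a', ha', hval⟩ | ⟨b', hb', hval⟩)
      · exact ha'.2 (Subtype.ext hval ▸ haC)
      · exact Set.disjoint_left.mp hd haA (Subtype.ext hval ▸ hb')
    have hne : S' ≠ M.verts := by
      intro h
      exact haS' (by rw [h]; exact a.2)
    refine hmin (M.induce S') (ThetaAux.induce_lt_of_ne M hS'sub hne) ?_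
    refine ThetaAux.hasTheta_induce M c S' hS'sub A' B ⟨vv, hvvA'⟩ hB ?_ hA'c hBc E hEc ?_ ?_ ?_
    · exact Set.disjoint_of_subset_left Set.diff_subset hd
    · intro e he
      obtain ⟨h1, h2, h3⟩ := hE e he
      refine ⟨⟨h1, ?_⟩, h2, h3⟩
      intro heC
      obtain ⟨hx, hr⟩ := heC
      obtain ⟨ha2, hnr⟩ := hcon e he hx
      exact hnr hr
    · intro a' ha'; exact Or.inl ⟨a', ha', rfl⟩
    · intro b hb; exact Or.inr ⟨b, hb, rfl⟩
  obtain ⟨b₀, hb₀⟩ := hB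
  rw [SimpleGraph.connected_iff_exists_forall_reachable]
  refine ⟨⟨(b₀ : V), ⟨b₀.2, by simpa using hBv b₀ hb₀⟩⟩, ?_⟩
  intro w
  apply SimpleGraph.Reachable.symm
  have hwM : (w : V) ∈ M.verts := w.2.1
  have hwv : (w : V) ≠ v := by
    have := w.2.2
    simpa using this
  set wq : ↥M.verts := ⟨(w : V), hwM⟩ with hwq
  have reachB : ∀ (x y : ↥M.verts) (hx : x ∈ B) (hy : y ∈ B),
      (M.deleteVerts {v}).coe.Reachable (fB ⟨x, hx⟩) (fB ⟨y, hy⟩) := by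
    intro x y hx hy
    exact (hBc.preconnected ⟨x, hx⟩ ⟨y, hy⟩).map fB
  rcases hverts wq with hwA | hwB
  · have hwne : wq ≠ vv := fun h => hwv (congrArg Subtype.val h)
    obtain ⟨e, he, h1, hr⟩ := cross wq hwA hwne
    obtain ⟨h1A, h2B, hadj⟩ := hE e he
    have r1 : (M.deleteVerts {v}).coe.Reachable (fA ⟨wq, ⟨hwA, hwne⟩⟩) (fA ⟨e.1, h1⟩) :=
      (hr ⟨hwA, hwne⟩).map fA
    have r2 : (M.deleteVerts {v}).coe.Adj (fA ⟨e.1, h1⟩) (fB ⟨e.2, h2B⟩) := by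
      simp only [SimpleGraph.Subgraph.coe_adj, SimpleGraph.Subgraph.deleteVerts_adj]
      exact ⟨e.1.2, by simpa [fA, fB, ThetaAux.avoidHom] using hAv e.1 h1, e.2.2, by simpa [fA, fB, ThetaAux.avoidHom] using hBv e.2 h2B, hadj⟩
    have r3 := reachB e.2 b₀ h2B hb₀
    exact ((r1.trans r2.reachable).trans r3 : _)
  · exact (reachB wq b₀ hwB hb₀ : _)

end Aux

/-- A minimal θ_c minor-model (c ≥ 2) is connected and has no cut vertex. -/
theorem minimal_theta_model_two_connected {V : Type} (G : SimpleGraph V) (c : ℕ) (hc : 2 ≤ c)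
    (M : G.Subgraph) (hM : IsMinimalThetaModel G c M) :
    M.Connected ∧ ∀ v ∈ M.verts, ((M.deleteVerts {v}).coe).Connected := by
  classical
  obtain ⟨⟨A, B, hA, hB, hd, hAc, hBc, E, hEc, hE⟩, hmin⟩ := hM
  -- Step 1: the vertex set of M is exactly A ∪ B
  have hSsub : Subtype.val '' A ∪ Subtype.val '' B ⊆ M.verts := by
    rintro x (⟨a, _, rfl⟩ | ⟨b, _, rfl⟩) <;> exact Subtype.coe_prop _
  have hSeq : Subtype.val '' A ∪ Subtype.val '' B = M.verts := by
    by_contra hne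
    exact hmin _ (ThetaAux.induce_lt_of_ne M hSsub hne)
      (ThetaAux.hasTheta_induce M c _ hSsub A B hA hB hd hAc hBc E hEc hE
        (fun a ha => Or.inl ⟨a, ha, rfl⟩) (fun b hb => Or.inr ⟨b, hb, rfl⟩))
  have hverts : ∀ x : ↥M.verts, x ∈ A ∨ x ∈ B := by
    intro x
    have hx : (x : V) ∈ Subtype.val '' A ∪ Subtype.val '' B := by rw [hSeq]; exact x.2
    rcases hx with ⟨a, ha, hax⟩ | ⟨b, hb, hbx⟩
    · exact Or.inl ((Subtype.ext hax : a = x) ▸ ha)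
    · exact Or.inr ((Subtype.ext hbx : b = x) ▸ hb)
  have hEne : E.Nonempty := Finset.card_pos.mp (by omega)
  constructor
  · -- M is connected
    refine SimpleGraph.Subgraph.Connected.mk ?_
    rw [SimpleGraph.connected_iff_exists_forall_reachable]
    obtain ⟨b₀, hb₀⟩ := hB
    obtain ⟨e₀, he₀⟩ := hEne
    obtain ⟨h1A, h2B, hadj⟩ := hE e₀ he₀
    have reachB : ∀ x : ↥M.verts, x ∈ B → M.coe.Reachable x b₀ := by
      intro x hx
      exact (hBc.preconnected ⟨x, hx⟩ ⟨b₀, hb₀⟩).map (ThetaAux.valHom M B)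
    refine ⟨b₀, ?_⟩
    intro w
    apply SimpleGraph.Reachable.symm
    rcases hverts w with hwA | hwB
    · have r1 : M.coe.Reachable w e₀.1 :=
        (hAc.preconnected ⟨w, hwA⟩ ⟨e₀.1, h1A⟩).map (ThetaAux.valHom M A)
      exact (r1.trans hadj.reachable).trans (reachB e₀.2 h2B)
    · exact reachB w hwB
  · -- no cut vertices
    intro v hv
    set vv : ↥M.verts := ⟨v, hv⟩ with hvv
    rcases hverts vv with hvvA | hvvB
    · exact ThetaAux.key_delete hmin A B hB hd hAc hBc E hEc hE hverts vv hvvA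
    · -- symmetric case: swap the roles of A and B
      have hA' : A.Nonempty := hA
      refine ThetaAux.key_delete hmin B A hA hd.symm hBc hAc
        (E.image Prod.swap) ?_ ?_ (fun x => (hverts x).symm) vv hvvB
      · rw [Finset.card_image_of_injective _ Prod.swap_injective, hEc]
      · intro e he
        rw [Finset.mem_image] at he
        obtain ⟨e₀, he₀, rfl⟩ := he
        obtain ⟨h1, h2, h3⟩ := hE e₀ he₀
        exact ⟨h2, h1, h3.symm⟩
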